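/- Let a symplectic manifold (M, ω) carry a smooth action of a Lie group G, and let J : M → G* be a group-valued momentum map (i.e. for all A in the Lie algebra g, the contraction of ω with the fundamental vector field A* satisfies A* ⨼ ω + κ(A, δJ) = 0, with δJ the left logarithmic derivative of J and κ a weakly non-degenerate pairing of g with the Lie algebra of G*). If h : M → ℝ is a G-invariant smooth function whose Hamiltonian vector field X_h exists with unique local flow, then J is constant along the integral curves of X_h (Noether's theorem). -/

import Mathlib

/-!
STATEMENT 1 (Noether's theorem for group-valued momentum maps).

A symplectic manifold is represented in a chart by a normed space `M`
(tangent spaces identified with `M`), with pointwise symplectic form `ω`.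
The dual group `G*` is realised as the group of units of a normed algebra `𝒜`,
whose Lie algebra is `𝒜`; the left logarithmic derivative `δJ` of `J : M → G*`
is encoded by `HasFDerivAt J (J m * δJ m ·) m`.
`κ` is a weakly non-degenerate pairing of the Lie algebra `g` of `G` with `𝒜`,
`inf A = A*` are the fundamental vector fields, `h` is a smooth function whose
infinitesimal `G`-invariance is `dh(A*) = 0`, `Xh` its Hamiltonian vector field
(`X_h ⨼ ω = -dh`), and the momentum map condition is `A* ⨼ ω + κ(A, δJ) = 0`.
Conclusion: `J` is constant along any integral curve `c` of `Xh`.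
-/
theorem noether_group_valued_momentum_map
    {M : Type*} [NormedAddCommGroup M] [NormedSpace ℝ M]
    {g : Type*} [AddCommGroup g] [Module ℝ g]
    {𝒜 : Type*} [NormedRing 𝒜] [NormedAlgebra ℝ 𝒜]
    (κ : g →ₗ[ℝ] 𝒜 →ₗ[ℝ] ℝ)
    (hκnd : ∀ μ : 𝒜, (∀ A : g, κ A μ = 0) → μ = 0)
    (ω : M → M →L[ℝ] M →L[ℝ] ℝ)
    (hskew : ∀ (m : M) (u v : M), ω m u v = - ω m v u)
    (inf : g → M → M)
    (h : M → ℝ) (dh : M → M →L[ℝ] ℝ)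
    (hdh : ∀ m, HasFDerivAt h (dh m) m)
    (Xh : M → M)
    (hXh : ∀ (m v : M), ω m (Xh m) v = - dh m v)
    (hinv : ∀ (A : g) (m : M), dh m (inf A m) = 0)
    (J : M → 𝒜) (hJunit : ∀ m, IsUnit (J m))
    (δJ : M → M →L[ℝ] 𝒜)
    (hJdiff : ∀ m, HasFDerivAt J
      (((ContinuousLinearMap.mul ℝ 𝒜) (J m)).comp (δJ m)) m)
    (hmom : ∀ (A : g) (m v : M), ω m (inf A m) v + κ A (δJ m v) = 0)
    (c : ℝ → M) (hc : ∀ t, HasDerivAt c (Xh (c t)) t) :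
    ∀ t : ℝ, J (c t) = J (c 0) := by
  have hδ : ∀ m, δJ m (Xh m) = 0 := by
    intro m
    apply hκnd
    intro A
    have h1 := hmom A m (Xh m)
    have h2 := hskew m (inf A m) (Xh m)
    have h3 := hXh m (inf A m)
    have h4 := hinv A m
    linarith
  have hderiv : ∀ t, HasDerivAt (fun t => J (c t)) 0 t := by
    intro t
    have := (hJdiff (c t)).comp_hasDerivAt t (hc t)
    simp [hδ (c t)] at this
    exact this
  intro t
  exact is_const_of_deriv_eq_zero (fun x => (hderiv x).differentiableAt)
    (fun x => (hderiv x).deriv) t 0
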